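/- Let ω_c > 0, −1 < p < 0, and let S : [0,∞) → ℝ be Lebesgue integrable with S(ω) = ω^p · G(ω) on (0, ω_c), where G is twice differentiable on [0, ω_c), G'' is bounded on [0, ω_c), and G(0) ≠ 0, G'(0) ≠ 0. Define Γ(t) = ∫₀^∞ S(ω)(1 − cos(ωt))/ω² dω for t ≥ 0. Then there exist constants C₂, C₄ ∈ ℝ such that (Γ(t) − C₂ − G(0)·C₄·t^{1−p})/t → 0 as t → ∞; moreover, if S(ω) ≥ 0 for all ω ≥ 0, then G(0)·C₄ > 0. -/

import Mathlib

open MeasureTheory Real Filter Set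

lemma one_sub_cos_nonneg' (x : ℝ) : 0 ≤ 1 - Real.cos x := by
  have := Real.cos_le_one x; linarith

lemma one_sub_cos_le_two' (x : ℝ) : 1 - Real.cos x ≤ 2 := by
  have := Real.neg_one_le_cos x; linarith

lemma one_sub_cos_le_sq' (x : ℝ) : 1 - Real.cos x ≤ x ^ 2 / 2 := by
  have := Real.one_sub_sq_div_two_le_cos (x := x); linarith

/-- For `0 ≤ s ≤ 2` and `x > 0`, `1 - cos x ≤ 2 x^s`. -/
lemma one_sub_cos_le_rpow' {s x : ℝ} (hs0 : 0 ≤ s) (hs2 : s ≤ 2) (hx : 0 < x) :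
    1 - Real.cos x ≤ 2 * x ^ s := by
  rcases le_or_gt 1 x with h1 | h1
  · have : (1:ℝ) ≤ x ^ s := Real.one_le_rpow h1 hs0
    have := one_sub_cos_le_two' x
    nlinarith
  · have hxs : x ^ (2:ℝ) ≤ x ^ s := Real.rpow_le_rpow_of_exponent_ge hx h1.le hs2
    have h2 : x ^ (2:ℝ) = x ^ 2 := by
      rw [show (2:ℝ) = ((2:ℕ):ℝ) by norm_num, Real.rpow_natCast]
    rw [h2] at hxs
    have hsq := one_sub_cos_le_sq' x
    have hpos : 0 ≤ x ^ s := (Real.rpow_pos_of_pos hx s).le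
    nlinarith [hsq, hxs]

lemma meas_aux (q t : ℝ) :
    Measurable (fun ω : ℝ => ω ^ q * (1 - Real.cos (ω * t))) :=
  (measurable_id.pow_const q).mul
    (measurable_const.sub (Real.measurable_cos.comp (measurable_id.mul_const t)))

/-- Integrability of `ω^q (1 - cos ωt)` on `[c,∞)` for `q < -1`. -/
lemma integrable_tail (q t c : ℝ) (hq : q < -1) (hc : 0 < c) :
    IntegrableOn (fun ω : ℝ => ω ^ q * (1 - Real.cos (ω * t))) (Ici c) := by
  have hrpow : IntegrableOn (fun ω : ℝ => ω ^ q) (Ici c) := by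
    rw [integrableOn_Ici_iff_integrableOn_Ioi]
    exact integrableOn_Ioi_rpow_of_lt hq hc
  refine Integrable.mono' (hrpow.const_mul 2) ((meas_aux q t).aestronglyMeasurable) ?_
  filter_upwards [ae_restrict_mem measurableSet_Ici] with ω hω
  have hω0 : 0 < ω := lt_of_lt_of_le hc hω
  have h1 : 0 ≤ 1 - Real.cos (ω * t) := one_sub_cos_nonneg' _
  have h2 : 1 - Real.cos (ω * t) ≤ 2 := one_sub_cos_le_two' _
  have hq0 : 0 ≤ ω ^ q := (Real.rpow_pos_of_pos hω0 q).le
  rw [Real.norm_eq_abs, abs_mul, abs_of_nonneg hq0, abs_of_nonneg h1]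
  nlinarith

/-- Integrability of `ω^(p-2) (1 - cos ωt)` on `(0,c)` for `-1 < p`. -/
lemma integrable_head (p t c : ℝ) (hp : -1 < p) :
    IntegrableOn (fun ω : ℝ => ω ^ (p - 2) * (1 - Real.cos (ω * t))) (Ioo 0 c) := by
  have hrpow : IntegrableOn (fun ω : ℝ => ω ^ p) (Ioo 0 c) := by
    rcases le_or_gt c 0 with h | h
    · rw [Ioo_eq_empty (by intro h'; exact absurd h (not_le.2 h'))]
      exact integrableOn_empty
    · have := intervalIntegral.intervalIntegrable_rpow' (r := p) hp (a := 0) (b := c)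
      rw [intervalIntegrable_iff_integrableOn_Ioo_of_le h.le] at this
      exact this
  refine Integrable.mono' (hrpow.const_mul (t ^ 2 / 2))
    ((meas_aux (p - 2) t).aestronglyMeasurable) ?_
  filter_upwards [ae_restrict_mem measurableSet_Ioo] with ω hω
  have hω0 : 0 < ω := hω.1
  have h1 : 0 ≤ 1 - Real.cos (ω * t) := one_sub_cos_nonneg' _
  have h2 : 1 - Real.cos (ω * t) ≤ (ω * t) ^ 2 / 2 := one_sub_cos_le_sq' _
  have hq0 : 0 ≤ ω ^ (p - 2) := (Real.rpow_pos_of_pos hω0 _).le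
  rw [Real.norm_eq_abs, abs_mul, abs_of_nonneg hq0, abs_of_nonneg h1]
  have h2' : ω ^ (2:ℝ) = ω ^ 2 := by
    rw [show (2:ℝ) = ((2:ℕ):ℝ) by norm_num, Real.rpow_natCast]
  have key : ω ^ (p - 2) * ω ^ 2 = ω ^ p := by
    rw [← h2', ← Real.rpow_add hω0]; ring_nf
  calc ω ^ (p - 2) * (1 - Real.cos (ω * t)) ≤ ω ^ (p - 2) * ((ω * t) ^ 2 / 2) :=
        mul_le_mul_of_nonneg_left h2 hq0
    _ = t ^ 2 / 2 * (ω ^ (p - 2) * ω ^ 2) := by ring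
    _ = t ^ 2 / 2 * ω ^ p := by rw [key]

/-- Scaling identity. -/
lemma scale_identity (p t : ℝ) (ht : 0 < t) :
    (∫ ω in Ioi (0:ℝ), ω ^ (p - 2) * (1 - Real.cos (ω * t)))
      = t ^ (1 - p) * ∫ x in Ioi (0:ℝ), x ^ (p - 2) * (1 - Real.cos x) := by
  have h := integral_comp_mul_left_Ioi (fun x : ℝ => x ^ (p - 2) * (1 - Real.cos x)) 0 ht
  simp only [mul_zero] at h
  have step : (∫ ω in Ioi (0:ℝ), ω ^ (p - 2) * (1 - Real.cos (ω * t)))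
      = ∫ ω in Ioi (0:ℝ), t ^ (2 - p) * ((t * ω) ^ (p - 2) * (1 - Real.cos (t * ω))) := by
    refine setIntegral_congr_fun measurableSet_Ioi (fun ω hω => ?_)
    have hω0 : (0:ℝ) < ω := hω
    rw [Real.mul_rpow ht.le hω0.le, mul_comm ω t]
    have : t ^ (2 - p) * (t ^ (p - 2) * ω ^ (p - 2) * (1 - Real.cos (t * ω)))
        = (t ^ (2 - p) * t ^ (p - 2)) * (ω ^ (p - 2) * (1 - Real.cos (t * ω))) := by ring
    rw [this, ← Real.rpow_add ht]
    norm_num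
  rw [step, integral_const_mul, h, smul_eq_mul, ← mul_assoc]
  congr 1
  rw [← Real.rpow_neg_one t, ← Real.rpow_add ht]
  ring_nf

set_option maxHeartbeats 2000000 in
/-- **Trushechkin's theorem, case `-1 < p < 0`.**
If `S` is integrable on `[0,∞)` and factors as `S ω = ω^p G ω` on `(0, ω_c)` with `G` twice
differentiable on `[0, ω_c)`, `G''` bounded there, and `G 0 ≠ 0`, `G' 0 ≠ 0`, then there are
constants `C₂, C₄` such that `(Γ t - C₂ - G 0 · C₄ · t^(1-p)) / t → 0` as `t → ∞`, where
`Γ t = ∫₀^∞ S ω (1 - cos (ω t)) / ω² dω`; moreover if `S ≥ 0` then `G 0 · C₄ > 0`. -/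
theorem trushechkin_case_p_between_neg_one_zero
    (ωc p : ℝ) (hωc : 0 < ωc) (hp0 : -1 < p) (hp1 : p < 0)
    (S G G' G'' : ℝ → ℝ)
    (hS_int : IntegrableOn S (Ici 0))
    (hfact : ∀ ω ∈ Ioo 0 ωc, S ω = ω ^ p * G ω)
    (hG' : ∀ ω ∈ Ico 0 ωc, HasDerivWithinAt G (G' ω) (Ico 0 ωc) ω)
    (hG'' : ∀ ω ∈ Ico 0 ωc, HasDerivWithinAt G' (G'' ω) (Ico 0 ωc) ω)
    (hG''bd : ∃ M : ℝ, ∀ ω ∈ Ico 0 ωc, |G'' ω| ≤ M)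
    (hG0 : G 0 ≠ 0) (hG'0 : G' 0 ≠ 0) :
    ∃ C₂ C₄ : ℝ,
      Tendsto (fun t : ℝ =>
          ((∫ ω in Ioi (0:ℝ), S ω * (1 - Real.cos (ω * t)) / ω ^ 2)
            - C₂ - G 0 * C₄ * t ^ (1 - p)) / t)
        atTop (nhds 0) ∧
      ((∀ ω ≥ (0:ℝ), 0 ≤ S ω) → 0 < G 0 * C₄) := by
  obtain ⟨M, hM⟩ := hG''bd
  have h0mem : (0:ℝ) ∈ Ico 0 ωc := ⟨le_refl 0, hωc⟩
  have hMnn : 0 ≤ M := le_trans (abs_nonneg _) (hM 0 h0mem)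
  set L : ℝ := |G' 0| + M * ωc with hLdef
  have hG'bd : ∀ ω ∈ Ico 0 ωc, |G' ω| ≤ L := by
    intro ω hω
    have h := (convex_Ico (0:ℝ) ωc).norm_image_sub_le_of_norm_hasDerivWithin_le
      (f' := G'') hG'' (fun x hx => by simpa [Real.norm_eq_abs] using hM x hx) h0mem hω
    simp only [Real.norm_eq_abs, sub_zero] at h
    have h1 : |G' ω| - |G' 0| ≤ |G' ω - G' 0| := by
      have := abs_sub_abs_le_abs_sub (G' ω) (G' 0); linarith
    have h2 : |ω| ≤ ωc := by rw [abs_of_nonneg hω.1]; exact hω.2.le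
    nlinarith
  have hLnn : 0 ≤ L := le_trans (abs_nonneg _) (hG'bd 0 h0mem)
  have hGlip : ∀ ω ∈ Ico 0 ωc, |G ω - G 0| ≤ L * ω := by
    intro ω hω
    have h := (convex_Ico (0:ℝ) ωc).norm_image_sub_le_of_norm_hasDerivWithin_le
      (f' := G') hG' (fun x hx => by simpa [Real.norm_eq_abs] using hG'bd x hx) h0mem hω
    simpa [Real.norm_eq_abs, abs_of_nonneg hω.1] using h
  set C₄ : ℝ := ∫ x in Ioi (0:ℝ), x ^ (p - 2) * (1 - Real.cos x) with hC4def
  set s : ℝ := (1 - p) / 2 with hsdef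
  have hs0 : 0 ≤ s := by rw [hsdef]; linarith
  have hs2 : s ≤ 2 := by rw [hsdef]; linarith
  have hs1 : s < 1 := by rw [hsdef]; linarith
  have hexp : -1 < p - 1 + s := by rw [hsdef]; linarith
  set K1 : ℝ := ∫ ω in Ici ωc, 2 / ωc ^ 2 * |S ω| with hK1def
  set K3 : ℝ := |G 0| * ∫ ω in Ici ωc, 2 * ω ^ (p - 2) with hK3def
  set K2 : ℝ := 2 * L * ∫ ω in Ioo (0:ℝ) ωc, ω ^ (p - 1 + s) with hK2def
  have hSmeas : AEStronglyMeasurable S (volume.restrict (Ici (0:ℝ))) :=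
    hS_int.aestronglyMeasurable
  have hSabs_int : IntegrableOn (fun ω => 2 / ωc ^ 2 * |S ω|) (Ici ωc) :=
    ((IntegrableOn.mono_set hS_int.abs (Ici_subset_Ici.2 hωc.le)).const_mul _)
  have hpow_tail_int : IntegrableOn (fun ω : ℝ => 2 * ω ^ (p - 2)) (Ici ωc) := by
    have h : IntegrableOn (fun ω : ℝ => ω ^ (p - 2)) (Ici ωc) := by
      rw [integrableOn_Ici_iff_integrableOn_Ioi]
      exact integrableOn_Ioi_rpow_of_lt (by linarith) hωc
    exact h.const_mul 2
  have hpow_head_int : IntegrableOn (fun ω : ℝ => ω ^ (p - 1 + s)) (Ioo 0 ωc) := by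
    have h := intervalIntegral.intervalIntegrable_rpow' (r := p - 1 + s) hexp (a := 0) (b := ωc)
    rw [intervalIntegrable_iff_integrableOn_Ioo_of_le hωc.le] at h
    exact h
  have hGcont : ContinuousOn G (Ico 0 ωc) := fun x hx => (hG' x hx).continuousWithinAt
  have hGmeas : AEStronglyMeasurable G (volume.restrict (Ioo 0 ωc)) :=
    (hGcont.mono Ioo_subset_Ico_self).aestronglyMeasurable measurableSet_Ioo
  have hdisj : Disjoint (Ioo (0:ℝ) ωc) (Ici ωc) :=
    Set.disjoint_left.2 (fun x hx hx2 => absurd hx.2 (not_lt.2 hx2))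
  -- the key per-t bound
  have key : ∀ t : ℝ, 0 < t →
      |(∫ ω in Ioi (0:ℝ), S ω * (1 - Real.cos (ω * t)) / ω ^ 2)
        - G 0 * C₄ * t ^ (1 - p)| ≤ K1 + K3 + K2 * t ^ s := by
    intro t ht
    obtain ⟨f, hfdef⟩ : ∃ f : ℝ → ℝ, f = fun ω => S ω * (1 - Real.cos (ω * t)) / ω ^ 2 :=
      ⟨_, rfl⟩
    obtain ⟨g, hgdef⟩ : ∃ g : ℝ → ℝ, g = fun ω => ω ^ (p - 2) * (1 - Real.cos (ω * t)) :=
      ⟨_, rfl⟩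
    obtain ⟨r, hrdef⟩ :
        ∃ r : ℝ → ℝ, r = fun ω => ω ^ (p - 2) * (G ω - G 0) * (1 - Real.cos (ω * t)) :=
      ⟨_, rfl⟩
    rw [show (fun ω : ℝ => S ω * (1 - Real.cos (ω * t)) / ω ^ 2) = f from hfdef.symm]
    have hg_eq : ∀ ω : ℝ, g ω = ω ^ (p - 2) * (1 - Real.cos (ω * t)) := fun ω => by rw [hgdef]
    have hr_eq : ∀ ω : ℝ, r ω = ω ^ (p - 2) * (G ω - G 0) * (1 - Real.cos (ω * t)) :=
      fun ω => by rw [hrdef]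
    have hf_eq : ∀ ω : ℝ, f ω = S ω * (1 - Real.cos (ω * t)) / ω ^ 2 := fun ω => by rw [hfdef]
    have hg_Ioo : IntegrableOn g (Ioo 0 ωc) := by
      rw [hgdef]; exact integrable_head p t ωc hp0
    have hg_Ici : IntegrableOn g (Ici ωc) := by
      rw [hgdef]; exact integrable_tail (p - 2) t ωc (by linarith) hωc
    -- measurability of r
    have hr_meas : AEStronglyMeasurable r (volume.restrict (Ioo 0 ωc)) := by
      rw [hrdef]
      have h1 : AEStronglyMeasurable (fun ω : ℝ => ω ^ (p - 2))
          (volume.restrict (Ioo 0 ωc)) :=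
        (measurable_id.pow_const (p - 2)).aestronglyMeasurable
      have h2 : AEStronglyMeasurable (fun ω : ℝ => 1 - Real.cos (ω * t))
          (volume.restrict (Ioo 0 ωc)) :=
        (measurable_const.sub (Real.measurable_cos.comp (measurable_id.mul_const t))
          ).aestronglyMeasurable
      exact (h1.mul (hGmeas.sub aestronglyMeasurable_const)).mul h2
    -- the pointwise bound for r
    have hr_bd : ∀ ω ∈ Ioo (0:ℝ) ωc, ‖r ω‖ ≤ 2 * L * t ^ s * ω ^ (p - 1 + s) := by
      intro ω hω
      have hω0 : 0 < ω := hω.1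
      have hcos : 0 ≤ 1 - Real.cos (ω * t) := one_sub_cos_nonneg' _
      have hcos2 : 1 - Real.cos (ω * t) ≤ 2 * (ω * t) ^ s :=
        one_sub_cos_le_rpow' hs0 hs2 (mul_pos hω0 ht)
      have hR : |G ω - G 0| ≤ L * ω := hGlip ω ⟨hω0.le, hω.2⟩
      have hq0 : 0 ≤ ω ^ (p - 2) := (Real.rpow_pos_of_pos hω0 _).le
      have hmul : (ω * t) ^ s = ω ^ s * t ^ s := Real.mul_rpow hω0.le ht.le
      have hts : 0 ≤ t ^ s := (Real.rpow_pos_of_pos ht s).le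
      have hωs : 0 ≤ ω ^ s := (Real.rpow_pos_of_pos hω0 s).le
      have hrw : ω ^ (p - 2) * ω * ω ^ s = ω ^ (p - 1 + s) := by
        have h' : ω ^ (p - 2) * ω ^ (1:ℝ) * ω ^ s = ω ^ (p - 1 + s) := by
          rw [← Real.rpow_add hω0, ← Real.rpow_add hω0]; ring_nf
        rw [Real.rpow_one] at h'; exact h'
      have : ‖r ω‖ = ω ^ (p - 2) * |G ω - G 0| * (1 - Real.cos (ω * t)) := by
        rw [hr_eq ω]
        simp only [Real.norm_eq_abs, abs_mul, abs_of_nonneg hq0, abs_of_nonneg hcos]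
      rw [this]
      calc ω ^ (p - 2) * |G ω - G 0| * (1 - Real.cos (ω * t))
          ≤ ω ^ (p - 2) * (L * ω) * (2 * (ω ^ s * t ^ s)) := by
            rw [← hmul]
            apply mul_le_mul (mul_le_mul_of_nonneg_left hR hq0) hcos2 hcos
            positivity
        _ = 2 * L * t ^ s * (ω ^ (p - 2) * ω * ω ^ s) := by ring
        _ = 2 * L * t ^ s * ω ^ (p - 1 + s) := by rw [hrw]
    have hr_int : IntegrableOn r (Ioo 0 ωc) := by
      refine Integrable.mono' ((hpow_head_int.const_mul (2 * L * t ^ s))) hr_meas ?_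
      filter_upwards [ae_restrict_mem measurableSet_Ioo] with ω hω
      exact hr_bd ω hω
    -- pointwise identity on (0, ωc)
    have hfIoo : ∀ ω ∈ Ioo (0:ℝ) ωc, f ω = G 0 * g ω + r ω := by
      intro ω hω
      have hω0 : 0 < ω := hω.1
      have h2' : ω ^ (2:ℝ) = ω ^ 2 := by
        rw [show (2:ℝ) = ((2:ℕ):ℝ) by norm_num, Real.rpow_natCast]
      have hdiv : ω ^ p / ω ^ 2 = ω ^ (p - 2) := by
        rw [← h2', ← Real.rpow_sub hω0]
      have key2 : ω ^ (p - 2) * ω ^ 2 = ω ^ p := by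
        rw [← h2', ← Real.rpow_add hω0]; ring_nf
      have hω2 : (ω:ℝ) ^ 2 ≠ 0 := by positivity
      have : f ω = ω ^ (p - 2) * G ω * (1 - Real.cos (ω * t)) := by
        rw [hf_eq ω, hfact ω hω, ← key2]
        field_simp
      rw [this, hg_eq ω, hr_eq ω]
      ring
    -- integrability of f on the two pieces
    have hf_Ioo : IntegrableOn f (Ioo 0 ωc) := by
      refine IntegrableOn.congr_fun ((hg_Ioo.const_mul (G 0)).add hr_int)
        (fun ω hω => (hfIoo ω hω).symm) measurableSet_Ioo
    have hf_Ici : IntegrableOn f (Ici ωc) := by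
      have hfm : AEStronglyMeasurable f (volume.restrict (Ici ωc)) := by
        have hSm : AEStronglyMeasurable S (volume.restrict (Ici ωc)) :=
          hSmeas.mono_set (Ici_subset_Ici.2 hωc.le)
        have hcontm : Measurable (fun ω : ℝ => (1 - Real.cos (ω * t)) / ω ^ 2) :=
          (measurable_const.sub (Real.measurable_cos.comp (measurable_id.mul_const t))).div
            (measurable_id.pow_const 2)
        rw [hfdef]
        refine (hSm.mul hcontm.aestronglyMeasurable).congr (ae_of_all _ fun ω => ?_)
        simp [Pi.mul_apply, mul_div_assoc]
      refine Integrable.mono' hSabs_int hfm ?_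
      filter_upwards [ae_restrict_mem measurableSet_Ici] with ω hω
      have hωge : ωc ≤ ω := hω
      have hω0 : 0 < ω := lt_of_lt_of_le hωc hωge
      have hcos : 0 ≤ 1 - Real.cos (ω * t) := one_sub_cos_nonneg' _
      have hcos2 : 1 - Real.cos (ω * t) ≤ 2 := one_sub_cos_le_two' _
      have hsq : ωc ^ 2 ≤ ω ^ 2 := by nlinarith
      have hωcsq : (0:ℝ) < ωc ^ 2 := by positivity
      rw [hf_eq ω]
      simp only [Real.norm_eq_abs, abs_div, abs_mul, abs_of_nonneg hcos, abs_pow, sq_abs]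
      rw [div_le_iff₀ (by positivity)]
      calc |S ω| * (1 - Real.cos (ω * t)) ≤ 2 * |S ω| := by
            nlinarith [abs_nonneg (S ω)]
        _ = (2 / ωc ^ 2 * |S ω|) * ωc ^ 2 := by field_simp
        _ ≤ (2 / ωc ^ 2 * |S ω|) * ω ^ 2 := by
            apply mul_le_mul_of_nonneg_left hsq; positivity
    -- splitting the integrals
    have hunion : Ioo (0:ℝ) ωc ∪ Ici ωc = Ioi 0 := Ioo_union_Ici_eq_Ioi hωc
    have hsplit_f : (∫ ω in Ioi (0:ℝ), f ω)
        = (∫ ω in Ioo (0:ℝ) ωc, f ω) + ∫ ω in Ici ωc, f ω := by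
      rw [← hunion]
      exact setIntegral_union hdisj measurableSet_Ici hf_Ioo hf_Ici
    have hsplit_g : (∫ ω in Ioi (0:ℝ), g ω)
        = (∫ ω in Ioo (0:ℝ) ωc, g ω) + ∫ ω in Ici ωc, g ω := by
      rw [← hunion]
      exact setIntegral_union hdisj measurableSet_Ici hg_Ioo hg_Ici
    have hgscale : (∫ ω in Ioi (0:ℝ), g ω) = t ^ (1 - p) * C₄ := by
      rw [hgdef]; exact scale_identity p t ht
    have hIoo_f : (∫ ω in Ioo (0:ℝ) ωc, f ω)
        = G 0 * (∫ ω in Ioo (0:ℝ) ωc, g ω) + ∫ ω in Ioo (0:ℝ) ωc, r ω := by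
      rw [setIntegral_congr_fun measurableSet_Ioo hfIoo,
        integral_add (hg_Ioo.const_mul (G 0)) hr_int, integral_const_mul]
    -- assemble the identity
    have hident : (∫ ω in Ioi (0:ℝ), f ω) - G 0 * C₄ * t ^ (1 - p)
        = (∫ ω in Ici ωc, f ω) + (∫ ω in Ioo (0:ℝ) ωc, r ω)
          - G 0 * ∫ ω in Ici ωc, g ω := by
      have hIoog : (∫ ω in Ioo (0:ℝ) ωc, g ω)
          = t ^ (1 - p) * C₄ - ∫ ω in Ici ωc, g ω := by
        rw [← hgscale, hsplit_g]; ring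
      rw [hsplit_f, hIoo_f, hIoog]; ring
    -- the three bounds
    have hb1 : |∫ ω in Ici ωc, f ω| ≤ K1 := by
      rw [hK1def, ← Real.norm_eq_abs]
      refine (norm_integral_le_of_norm_le hSabs_int ?_)
      filter_upwards [ae_restrict_mem measurableSet_Ici] with ω hω
      -- same bound as integrability proof
      have hωge : ωc ≤ ω := hω
      have hω0 : 0 < ω := lt_of_lt_of_le hωc hωge
      have hcos : 0 ≤ 1 - Real.cos (ω * t) := one_sub_cos_nonneg' _
      have hcos2 : 1 - Real.cos (ω * t) ≤ 2 := one_sub_cos_le_two' _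
      have hsq : ωc ^ 2 ≤ ω ^ 2 := by nlinarith
      rw [hf_eq ω]
      simp only [Real.norm_eq_abs, abs_div, abs_mul, abs_of_nonneg hcos, abs_pow, sq_abs]
      rw [div_le_iff₀ (by positivity)]
      calc |S ω| * (1 - Real.cos (ω * t)) ≤ 2 * |S ω| := by
            nlinarith [abs_nonneg (S ω)]
        _ = (2 / ωc ^ 2 * |S ω|) * ωc ^ 2 := by field_simp
        _ ≤ (2 / ωc ^ 2 * |S ω|) * ω ^ 2 := by
            apply mul_le_mul_of_nonneg_left hsq; positivity
    have hb3 : |G 0 * ∫ ω in Ici ωc, g ω| ≤ K3 := by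
      rw [hK3def, abs_mul]
      refine mul_le_mul_of_nonneg_left ?_ (abs_nonneg _)
      rw [← Real.norm_eq_abs]
      refine (norm_integral_le_of_norm_le hpow_tail_int ?_)
      filter_upwards [ae_restrict_mem measurableSet_Ici] with ω hω
      have hω0 : 0 < ω := lt_of_lt_of_le hωc hω
      have hcos : 0 ≤ 1 - Real.cos (ω * t) := one_sub_cos_nonneg' _
      have hcos2 : 1 - Real.cos (ω * t) ≤ 2 := one_sub_cos_le_two' _
      have hq0 : 0 ≤ ω ^ (p - 2) := (Real.rpow_pos_of_pos hω0 _).le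
      rw [hg_eq ω]
      simp only [Real.norm_eq_abs, abs_mul, abs_of_nonneg hq0, abs_of_nonneg hcos]
      nlinarith
    have hb2 : |∫ ω in Ioo (0:ℝ) ωc, r ω| ≤ K2 * t ^ s := by
      have h := norm_integral_le_of_norm_le (hpow_head_int.const_mul (2 * L * t ^ s))
        (by filter_upwards [ae_restrict_mem measurableSet_Ioo] with ω hω using hr_bd ω hω)
      rw [integral_const_mul] at h
      rw [hK2def, ← Real.norm_eq_abs]
      calc ‖∫ ω in Ioo (0:ℝ) ωc, r ω‖ ≤ 2 * L * t ^ s * ∫ ω in Ioo (0:ℝ) ωc, ω ^ (p - 1 + s) := h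
        _ = 2 * L * (∫ ω in Ioo (0:ℝ) ωc, ω ^ (p - 1 + s)) * t ^ s := by ring
    rw [hident]
    calc |(∫ ω in Ici ωc, f ω) + (∫ ω in Ioo (0:ℝ) ωc, r ω) - G 0 * ∫ ω in Ici ωc, g ω|
        ≤ |∫ ω in Ici ωc, f ω| + |∫ ω in Ioo (0:ℝ) ωc, r ω| + |G 0 * ∫ ω in Ici ωc, g ω| := by
          exact (abs_sub _ _).trans (by gcongr; exact abs_add_le _ _)
      _ ≤ K1 + K2 * t ^ s + K3 := by gcongr
      _ = K1 + K3 + K2 * t ^ s := by ring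
  -- the tendsto statement
  refine ⟨0, C₄, ?_, ?_⟩
  · have hbd : ∀ᶠ t : ℝ in atTop,
        ‖((∫ ω in Ioi (0:ℝ), S ω * (1 - Real.cos (ω * t)) / ω ^ 2)
          - 0 - G 0 * C₄ * t ^ (1 - p)) / t‖
          ≤ (K1 + K3) / t + K2 * t ^ (s - 1) := by
      filter_upwards [eventually_ge_atTop (1:ℝ)] with t ht1
      have ht : 0 < t := lt_of_lt_of_le zero_lt_one ht1
      have hk := key t ht
      rw [Real.norm_eq_abs, sub_zero, abs_div, abs_of_pos ht]
      have hts : t ^ s / t = t ^ (s - 1) := by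
        rw [Real.rpow_sub ht, Real.rpow_one]
      calc |(∫ ω in Ioi (0:ℝ), S ω * (1 - Real.cos (ω * t)) / ω ^ 2)
            - G 0 * C₄ * t ^ (1 - p)| / t
          ≤ (K1 + K3 + K2 * t ^ s) / t := by gcongr
        _ = (K1 + K3) / t + K2 * (t ^ s / t) := by ring
        _ = (K1 + K3) / t + K2 * t ^ (s - 1) := by rw [hts]
    have hlim : Tendsto (fun t : ℝ => (K1 + K3) / t + K2 * t ^ (s - 1)) atTop (nhds 0) := by
      have h1 : Tendsto (fun t : ℝ => (K1 + K3) / t) atTop (nhds 0) :=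
        tendsto_const_nhds.div_atTop tendsto_id
      have h2 : Tendsto (fun t : ℝ => K2 * t ^ (s - 1)) atTop (nhds 0) := by
        have h := (tendsto_rpow_neg_atTop (y := 1 - s) (by linarith)).const_mul K2
        rw [mul_zero] at h
        have he : (fun t : ℝ => K2 * t ^ (-(1 - s))) = fun t : ℝ => K2 * t ^ (s - 1) := by
          funext t; rw [show -(1 - s) = s - 1 from by ring]
        rwa [he] at h
      simpa using h1.add h2
    exact squeeze_zero_norm' hbd hlim
  · intro hSpos
    -- G 0 > 0
    have hGnn : ∀ ω ∈ Ioo (0:ℝ) ωc, 0 ≤ G ω := by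
      intro ω hω
      have hSω : 0 ≤ S ω := hSpos ω hω.1.le
      rw [hfact ω hω] at hSω
      have hωp : 0 < ω ^ p := Real.rpow_pos_of_pos hω.1 p
      nlinarith
    have hne : (nhdsWithin (0:ℝ) (Ioo 0 ωc)).NeBot := by
      apply mem_closure_iff_nhdsWithin_neBot.1
      rw [closure_Ioo hωc.ne]
      exact ⟨le_refl 0, hωc.le⟩
    have htd : Tendsto G (nhdsWithin 0 (Ioo 0 ωc)) (nhds (G 0)) :=
      (hGcont 0 h0mem).mono_left (nhdsWithin_mono _ Ioo_subset_Ico_self)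
    have hG0nn : 0 ≤ G 0 :=
      ge_of_tendsto htd (eventually_nhdsWithin_of_forall hGnn)
    have hG0pos : 0 < G 0 := lt_of_le_of_ne hG0nn (Ne.symm hG0)
    -- C₄ > 0
    have I1 : IntegrableOn (fun x : ℝ => x ^ (p - 2) * (1 - Real.cos x)) (Ioo 0 1) := by
      have := integrable_head p 1 1 hp0
      simpa using this
    have I2 : IntegrableOn (fun x : ℝ => x ^ (p - 2) * (1 - Real.cos x)) (Ici 1) := by
      have := integrable_tail (p - 2) 1 1 (by linarith) one_pos
      simpa using this
    have hC4int : IntegrableOn (fun x : ℝ => x ^ (p - 2) * (1 - Real.cos x)) (Ioi 0) := by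
      rw [← Ioo_union_Ici_eq_Ioi one_pos]
      exact I1.union I2
    have hnnae : 0 ≤ᵐ[volume.restrict (Ioi (0:ℝ))]
        fun x : ℝ => x ^ (p - 2) * (1 - Real.cos x) := by
      filter_upwards [ae_restrict_mem measurableSet_Ioi] with x hx
      exact mul_nonneg (Real.rpow_pos_of_pos hx _).le (one_sub_cos_nonneg' _)
    have hsub : Ioc (π / 2) π ⊆ Ioi (0:ℝ) := fun x hx =>
      lt_trans (by positivity) hx.1
    have hmono : (∫ x in Ioc (π / 2) π, x ^ (p - 2) * (1 - Real.cos x)) ≤ C₄ := by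
      rw [hC4def]
      exact setIntegral_mono_set hC4int hnnae (HasSubset.Subset.eventuallyLE hsub)
    have hlow : π ^ (p - 2) * (π / 2) ≤ ∫ x in Ioc (π / 2) π, x ^ (p - 2) * (1 - Real.cos x) := by
      have hconst : (∫ _x in Ioc (π / 2) π, π ^ (p - 2))
          ≤ ∫ x in Ioc (π / 2) π, x ^ (p - 2) * (1 - Real.cos x) := by
        refine setIntegral_mono_on (integrableOn_const measure_Ioc_lt_top.ne)
          (hC4int.mono_set hsub) measurableSet_Ioc (fun x hx => ?_)
        have hx0 : 0 < x := hsub hx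
        have hxr : π ^ (p - 2) ≤ x ^ (p - 2) :=
          Real.rpow_le_rpow_of_nonpos hx0 hx.2 (by linarith)
        have hcos : Real.cos x ≤ 0 :=
          Real.cos_nonpos_of_pi_div_two_le_of_le hx.1.le (by linarith [Real.pi_pos, hx.2])
        have h1c : (1:ℝ) ≤ 1 - Real.cos x := by linarith
        calc π ^ (p - 2) = π ^ (p - 2) * 1 := by ring
          _ ≤ x ^ (p - 2) * (1 - Real.cos x) :=
            mul_le_mul hxr h1c zero_le_one ((Real.rpow_pos_of_pos hx0 _).le)
      have hval : (∫ _x in Ioc (π / 2) π, π ^ (p - 2)) = π ^ (p - 2) * (π / 2) := by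
        rw [setIntegral_const, measureReal_def, Real.volume_Ioc, smul_eq_mul,
          ENNReal.toReal_ofReal (by linarith [Real.pi_pos])]
        ring_nf
      linarith
    have hC4pos : 0 < C₄ := by
      have hπ : 0 < π ^ (p - 2) * (π / 2) := by
        have := Real.pi_pos
        have := Real.rpow_pos_of_pos Real.pi_pos (p - 2)
        positivity
      linarith
    exact mul_pos hG0pos hC4pos
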